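/- Let d be a positive natural number and D : Matrix (Fin d) (Fin d) ℂ a Hermitian matrix with (real) eigenvalues λ₁, …, λ_d (given by IsHermitian.eigenvalues). Then sSup { x : ℝ | ∃ P : Matrix (Fin d) (Fin d) ℂ, P.PosSemidef ∧ (1 − P).PosSemidef ∧ x = ((P * D).trace).re } − sInf { x : ℝ | ∃ P, P.PosSemidef ∧ (1 − P).PosSemidef ∧ x = ((P * D).trace).re } = Σ_i |λ_i|, i.e. the supremum minus the infimum of Tr[PD] over all quantum effects 0 ≤ P ≤ I equals the trace norm of D. -/

import Mathlib

open scoped ComplexOrder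

open Matrix
lemma diag_re_nonneg' {n : ℕ} {Q : Matrix (Fin n) (Fin n) ℂ} (hQ : Q.PosSemidef) (i : Fin n) :
    0 ≤ (Q i i).re := by
  have h := hQ.dotProduct_mulVec_nonneg (Pi.single i 1)
  simp [dotProduct, Matrix.mulVec, Pi.single_apply] at h
  simpa using (Complex.le_def.mp h).1

lemma trace_eff {n : ℕ} (D : Matrix (Fin n) (Fin n) ℂ) (hD : D.IsHermitian)
    (P : Matrix (Fin n) (Fin n) ℂ) :
    ((P * D).trace).re = ∑ i, hD.eigenvalues i *
      (((star (hD.eigenvectorUnitary : Matrix (Fin n) (Fin n) ℂ)) * P *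
        (hD.eigenvectorUnitary : Matrix (Fin n) (Fin n) ℂ)) i i).re := by
  set U : Matrix (Fin n) (Fin n) ℂ := (hD.eigenvectorUnitary : Matrix (Fin n) (Fin n) ℂ) with hU
  set Λ : Matrix (Fin n) (Fin n) ℂ := diagonal (RCLike.ofReal ∘ hD.eigenvalues) with hΛ
  have h1 : (P * D).trace = ((star U * P * U) * Λ).trace := by
    conv_lhs => rw [hD.spectral_theorem, Unitary.conjStarAlgAut_apply]
    rw [← hU, ← hΛ, ← mul_assoc, ← mul_assoc, Matrix.trace_mul_cycle, mul_assoc, mul_assoc,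
      ← mul_assoc P, ← mul_assoc, ← mul_assoc]
  rw [h1, hΛ]
  simp [Matrix.trace, Matrix.mul_diagonal, Matrix.diag, Function.comp, mul_comm]

lemma mem_eff_set {n : ℕ} (D : Matrix (Fin n) (Fin n) ℂ) (hD : D.IsHermitian)
    (c : Fin n → ℝ) (hc : ∀ i, c i = 0 ∨ c i = 1) :
    (∑ i, hD.eigenvalues i * c i) ∈ {x : ℝ | ∃ P : Matrix (Fin n) (Fin n) ℂ,
        P.PosSemidef ∧ (1 - P).PosSemidef ∧ x = ((P * D).trace).re} := by
  set U : Matrix (Fin n) (Fin n) ℂ := (hD.eigenvectorUnitary : Matrix (Fin n) (Fin n) ℂ) with hU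
  have hUU : star U * U = 1 := by
    rw [hU, Matrix.star_eq_conjTranspose]
    exact (Matrix.mem_unitaryGroup_iff').mp hD.eigenvectorUnitary.2
  have hUU' : U * star U = 1 := by
    rw [hU, Matrix.star_eq_conjTranspose]
    exact (Matrix.mem_unitaryGroup_iff).mp hD.eigenvectorUnitary.2
  set P : Matrix (Fin n) (Fin n) ℂ := U * diagonal (fun i => (c i : ℂ)) * star U with hP
  have hcnn : ∀ i, (0:ℂ) ≤ (c i : ℂ) := by
    intro i; rcases hc i with h | h <;> simp [h]
  have hPpsd : P.PosSemidef := by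
    have := (Matrix.PosSemidef.diagonal (fun i => hcnn i)).mul_mul_conjTranspose_same U
    simpa [hP, Matrix.star_eq_conjTranspose] using this
  have hone : (1 : Matrix (Fin n) (Fin n) ℂ) - P = U * diagonal (fun i => (1 - c i : ℂ)) * star U := by
    have : (diagonal (fun i => (1 - c i : ℂ))) = 1 - diagonal (fun i => (c i : ℂ)) := by
      rw [← Matrix.diagonal_one, Matrix.diagonal_sub]
    rw [this, hP, Matrix.mul_sub, Matrix.sub_mul, mul_one, hUU']
  have h1Ppsd : ((1 : Matrix (Fin n) (Fin n) ℂ) - P).PosSemidef := by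
    rw [hone]
    have hnn : ∀ i, (0:ℂ) ≤ (1 - c i : ℂ) := by
      intro i; rcases hc i with h | h <;> simp [h]
    have := (Matrix.PosSemidef.diagonal (fun i => hnn i)).mul_mul_conjTranspose_same U
    simpa [Matrix.star_eq_conjTranspose] using this
  refine ⟨P, hPpsd, h1Ppsd, ?_⟩
  rw [trace_eff D hD P]
  have hQ : star U * P * U = diagonal (fun i => (c i : ℂ)) := by
    rw [hP]
    rw [show star U * (U * diagonal (fun i => (c i : ℂ)) * star U) * U
      = (star U * U) * diagonal (fun i => (c i : ℂ)) * (star U * U) by simp only [mul_assoc]]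
    rw [hUU, one_mul, mul_one]
  rw [hQ]
  simp [Matrix.diagonal_apply_eq]

lemma eff_bounds {n : ℕ} (D : Matrix (Fin n) (Fin n) ℂ) (hD : D.IsHermitian)
    {x : ℝ} (hx : x ∈ {x : ℝ | ∃ P : Matrix (Fin n) (Fin n) ℂ,
        P.PosSemidef ∧ (1 - P).PosSemidef ∧ x = ((P * D).trace).re}) :
    (∑ i, min (hD.eigenvalues i) 0) ≤ x ∧ x ≤ ∑ i, max (hD.eigenvalues i) 0 := by
  obtain ⟨P, hP, h1P, rfl⟩ := hx
  set U : Matrix (Fin n) (Fin n) ℂ := (hD.eigenvectorUnitary : Matrix (Fin n) (Fin n) ℂ) with hU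
  have hUU : star U * U = 1 := by
    rw [hU, Matrix.star_eq_conjTranspose]
    exact (Matrix.mem_unitaryGroup_iff').mp hD.eigenvectorUnitary.2
  set Q : Matrix (Fin n) (Fin n) ℂ := star U * P * U with hQdef
  have hQ : Q.PosSemidef := by
    have := hP.conjTranspose_mul_mul_same U
    simpa [hQdef, Matrix.star_eq_conjTranspose] using this
  have h1Q : ((1 : Matrix (Fin n) (Fin n) ℂ) - Q).PosSemidef := by
    have := h1P.conjTranspose_mul_mul_same U
    have he : Uᴴ * (1 - P) * U = 1 - Q := by
      rw [Matrix.mul_sub, Matrix.sub_mul, mul_one, ← Matrix.star_eq_conjTranspose, hUU, hQdef]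
    rwa [he] at this
  have hq0 : ∀ i, 0 ≤ (Q i i).re := fun i => diag_re_nonneg' hQ i
  have hq1 : ∀ i, (Q i i).re ≤ 1 := by
    intro i
    have := diag_re_nonneg' h1Q i
    simp only [Matrix.sub_apply, Matrix.one_apply_eq, Complex.sub_re, Complex.one_re] at this
    linarith
  rw [trace_eff D hD P, ← hU, ← hQdef]
  constructor
  · refine Finset.sum_le_sum fun i _ => ?_
    rcases le_or_gt 0 (hD.eigenvalues i) with h | h
    · rw [min_eq_right h]
      exact mul_nonneg h (hq0 i)
    · rw [min_eq_left h.le]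
      calc hD.eigenvalues i = hD.eigenvalues i * 1 := (mul_one _).symm
        _ ≤ hD.eigenvalues i * (Q i i).re := by
            apply mul_le_mul_of_nonpos_left (hq1 i) h.le
  · refine Finset.sum_le_sum fun i _ => ?_
    rcases le_or_gt 0 (hD.eigenvalues i) with h | h
    · rw [max_eq_left h]
      calc hD.eigenvalues i * (Q i i).re ≤ hD.eigenvalues i * 1 :=
            mul_le_mul_of_nonneg_left (hq1 i) h
        _ = hD.eigenvalues i := mul_one _
    · rw [max_eq_right h.le]
      exact mul_nonpos_of_nonpos_of_nonneg h.le (hq0 i)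

/-- The operational norm in quantum theory is the trace norm: the supremum minus the
infimum of `Tr[PD]` over all quantum effects `0 ≤ P ≤ I` equals `Σᵢ |λᵢ(D)|`. -/
theorem operational_norm_eq_trace_norm
    (d : ℕ) (hd : 0 < d)
    (D : Matrix (Fin d) (Fin d) ℂ) (hD : D.IsHermitian) :
    sSup {x : ℝ | ∃ P : Matrix (Fin d) (Fin d) ℂ,
        P.PosSemidef ∧ (1 - P).PosSemidef ∧ x = ((P * D).trace).re} -
      sInf {x : ℝ | ∃ P : Matrix (Fin d) (Fin d) ℂ,
        P.PosSemidef ∧ (1 - P).PosSemidef ∧ x = ((P * D).trace).re} =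
      ∑ i, |hD.eigenvalues i| := by
  set S := {x : ℝ | ∃ P : Matrix (Fin d) (Fin d) ℂ,
        P.PosSemidef ∧ (1 - P).PosSemidef ∧ x = ((P * D).trace).re} with hS
  have hmemU : (∑ i, max (hD.eigenvalues i) 0) ∈ S := by
    have := mem_eff_set D hD (fun i => if 0 ≤ hD.eigenvalues i then 1 else 0)
      (fun i => by split <;> simp)
    have he : (∑ i, hD.eigenvalues i * (if 0 ≤ hD.eigenvalues i then 1 else 0))
        = ∑ i, max (hD.eigenvalues i) 0 := by
      refine Finset.sum_congr rfl fun i _ => ?_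
      split <;> rename_i h
      · rw [mul_one, max_eq_left h]
      · rw [mul_zero, max_eq_right (le_of_not_ge h)]
    rwa [he] at this
  have hmemL : (∑ i, min (hD.eigenvalues i) 0) ∈ S := by
    have := mem_eff_set D hD (fun i => if hD.eigenvalues i < 0 then 1 else 0)
      (fun i => by split <;> simp)
    have he : (∑ i, hD.eigenvalues i * (if hD.eigenvalues i < 0 then 1 else 0))
        = ∑ i, min (hD.eigenvalues i) 0 := by
      refine Finset.sum_congr rfl fun i _ => ?_
      split <;> rename_i h
      · rw [mul_one, min_eq_left h.le]
      · rw [mul_zero, min_eq_right (le_of_not_gt h)]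
    rwa [he] at this
  have hsup : sSup S = ∑ i, max (hD.eigenvalues i) 0 := by
    apply le_antisymm
    · exact csSup_le ⟨_, hmemU⟩ fun x hx => (eff_bounds D hD hx).2
    · exact le_csSup ⟨_, fun x hx => (eff_bounds D hD hx).2⟩ hmemU
  have hinf : sInf S = ∑ i, min (hD.eigenvalues i) 0 := by
    apply le_antisymm
    · exact csInf_le ⟨_, fun x hx => (eff_bounds D hD hx).1⟩ hmemL
    · exact le_csInf ⟨_, hmemL⟩ fun x hx => (eff_bounds D hD hx).1
  rw [hsup, hinf, ← Finset.sum_sub_distrib]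
  refine Finset.sum_congr rfl fun i _ => ?_
  rw [max_sub_min_eq_abs]; simp
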